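/- Let p ≥ 2 be an integer and let F : ℤ → ℤ be multiplication by p. Then: (a) every F-subset of ℤ is p-normal, and (b) every p-normal subset of ℤ has finite symmetric difference with some F-subset of ℤ. In other words, up to finite symmetric differences, the F-subsets of ℤ are exactly the p-normal subsets. -/

import Mathlib

open Pointwise

/-- The `F`-cycle `C(γ;δ)` in `ℤ`, where `F` is multiplication by `p`. -/
def ZCycle (p : ℤ) (γ : ℤ) (δ : ℕ) : Set ℤ :=
  {x | ∃ ℓ : ℕ, x = ∑ i ∈ Finset.range (ℓ + 1), p ^ (i * δ) * γ}

/-- Basic `F`-sets in `ℤ` for `F` multiplication by `p`: set sums of finitely many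
singletons, subgroups (all of which are invariant under multiplication by `p`), and
`F`-cycles. -/
inductive IsZFBasic (p : ℤ) : Set ℤ → Prop
  | singleton (γ : ℤ) : IsZFBasic p {γ}
  | subgroup (H : AddSubgroup ℤ) : IsZFBasic p ↑H
  | cycle (γ : ℤ) (δ : ℕ) (hδ : 0 < δ) : IsZFBasic p (ZCycle p γ δ)
  | add (S T : Set ℤ) : IsZFBasic p S → IsZFBasic p T → IsZFBasic p (S + T)

/-- An `F`-subset of `ℤ`, for `F` multiplication by `p`: a finite union of basic sets. -/
def IsZFSet (p : ℤ) (S : Set ℤ) : Prop :=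
  ∃ (n : ℕ) (U : Fin n → Set ℤ), (∀ i, IsZFBasic p (U i)) ∧ S = ⋃ i, U i

/-- An elementary `p`-nested subset of `ℤ`:
`S̃_{p^δ}(c₀; c₁,…,c_d) = {c₀/(p^δ−1) + p^{ℓ₁δ} c₁/(p^δ−1) + ⋯ + p^{ℓ_d δ} c_d/(p^δ−1)}`,
where `(p^δ − 1) ∣ (c₀ + ⋯ + c_d)`.  (We clear denominators, which is equivalent since
`p^δ − 1 ≠ 0` when `p ≥ 2`.) -/
def IsElemPNested (p : ℤ) (S : Set ℤ) : Prop :=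
  ∃ (δ : ℕ), 0 < δ ∧ ∃ (d : ℕ) (c : Fin (d + 1) → ℤ),
    ((p ^ δ - 1) ∣ ∑ i, c i) ∧
    S = {x : ℤ | ∃ ℓ : Fin d → ℕ,
      (p ^ δ - 1) * x = c 0 + ∑ i : Fin d, p ^ (ℓ i * δ) * c i.succ}

/-- A `p`-normal subset of `ℤ`: up to a finite symmetric difference, a finite union of
elementary `p`-nested sets and cosets of subgroups of `ℤ`. -/
def IsPNormal (p : ℤ) (S : Set ℤ) : Prop :=
  ∃ (n : ℕ) (U : Fin n → Set ℤ),
    (∀ i, IsElemPNested p (U i) ∨ ∃ (a : ℤ) (H : AddSubgroup ℤ), U i = {a} + (H : Set ℤ)) ∧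
    (symmDiff S (⋃ i, U i)).Finite

section Aux

variable {p : ℤ}

/-- A piece: an elementary nested set or a coset. -/
def IsPiece (p : ℤ) (S : Set ℤ) : Prop :=
  IsElemPNested p S ∨ ∃ (a : ℤ) (H : AddSubgroup ℤ), S = {a} + (H : Set ℤ)

/-- An exact finite union of pieces. -/
def IsPieceUnion (p : ℤ) (S : Set ℤ) : Prop :=
  ∃ (n : ℕ) (U : Fin n → Set ℤ), (∀ i, IsPiece p (U i)) ∧ S = ⋃ i, U i

lemma flatten_iUnion {α : Type*} (P : Set α → Prop)
    {ι : Type*} [Fintype ι] (f : ι → Set α)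
    (hf : ∀ i, ∃ (n : ℕ) (U : Fin n → Set α), (∀ j, P (U j)) ∧ f i = ⋃ j, U j) :
    ∃ (n : ℕ) (U : Fin n → Set α), (∀ j, P (U j)) ∧ (⋃ i, f i) = ⋃ j, U j := by
  choose n U hU hfU using hf
  let e := Fintype.equivFin ((i : ι) × Fin (n i))
  refine ⟨Fintype.card ((i : ι) × Fin (n i)), fun k => U (e.symm k).1 (e.symm k).2,
    fun k => hU _ _, ?_⟩
  have : (⋃ i, f i) = ⋃ s : (i : ι) × Fin (n i), U s.1 s.2 := by
    rw [Set.iUnion_sigma]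
    exact Set.iUnion_congr hfU
  rw [this]
  exact (Set.iUnion_congr_of_surjective _ e.symm.surjective (fun k => rfl)).symm

lemma IsPiece.pieceUnion {S : Set ℤ} (h : IsPiece p S) : IsPieceUnion p S :=
  ⟨1, fun _ => S, fun _ => h, (Set.iUnion_const S).symm⟩

lemma isPieceUnion_iUnion {ι : Type*} [Fintype ι] (f : ι → Set ℤ)
    (h : ∀ i, IsPieceUnion p (f i)) : IsPieceUnion p (⋃ i, f i) :=
  flatten_iUnion (IsPiece p) f h

lemma pow_delta_pos (hp : 2 ≤ p) (δ : ℕ) (hδ : 0 < δ) : 1 < p ^ δ :=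
  one_lt_pow₀ (by linarith) hδ.ne'

lemma geom_key (δ : ℕ) (γ : ℤ) (n : ℕ) :
    (p ^ δ - 1) * (∑ i ∈ Finset.range n, p ^ (i * δ) * γ) = (p ^ (n * δ) - 1) * γ := by
  have h1 : ∀ i : ℕ, p ^ (i * δ) = (p ^ δ) ^ i := fun i => by
    rw [← pow_mul, mul_comm]
  simp_rw [h1, ← Finset.sum_mul, ← mul_assoc, mul_comm (p ^ δ - 1),
    geom_sum_mul]

lemma zcycle_nested (hp : 2 ≤ p) (γ : ℤ) (δ : ℕ) (hδ : 0 < δ) :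
    IsElemPNested p (ZCycle p γ δ) := by
  have hne : (p ^ δ - 1) ≠ 0 := by have := pow_delta_pos hp δ hδ; omega
  refine ⟨δ, hδ, 1, ![-γ, p ^ δ * γ], ?_, ?_⟩
  · simp [Fin.sum_univ_two]
    ring_nf
    exact ⟨γ, by ring⟩
  · ext x
    simp only [ZCycle, Set.mem_setOf_eq, Fin.sum_univ_one]
    constructor
    · rintro ⟨ℓ, rfl⟩
      refine ⟨fun _ => ℓ, ?_⟩
      rw [geom_key]
      simp [Matrix.cons_val_zero]
      ring_nf
    · rintro ⟨ℓ, hℓ⟩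
      refine ⟨ℓ 0, ?_⟩
      have h2 : (p ^ δ - 1) * (∑ i ∈ Finset.range (ℓ 0 + 1), p ^ (i * δ) * γ)
          = (p ^ δ - 1) * x := by
        rw [geom_key, hℓ]
        simp [Matrix.cons_val_zero]
        ring_nf
      exact (mul_left_cancel₀ hne h2).symm

lemma dvd_aux (δ m : ℕ) : (p ^ δ - 1 : ℤ) ∣ p ^ (m * δ) - 1 := by
  rw [mul_comm, pow_mul]
  simpa using sub_dvd_pow_sub_pow (p ^ δ) 1 m

lemma shift_key (δ : ℕ) {d : ℕ} (c : Fin (d + 1) → ℤ) (ℓ : Fin d → ℕ) :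
    c 0 + ∑ i : Fin d, p ^ (ℓ i * δ) * c i.succ
      = (∑ i, c i) + ∑ i : Fin d, (p ^ (ℓ i * δ) - 1) * c i.succ := by
  rw [Fin.sum_univ_succ, add_assoc, ← Finset.sum_add_distrib]
  congr 1
  exact Finset.sum_congr rfl fun i _ => by ring

lemma dvd_shift {δ : ℕ} {d : ℕ} (c : Fin (d + 1) → ℤ)
    (hc : (p ^ δ - 1) ∣ ∑ i, c i) (ℓ : Fin d → ℕ) :
    (p ^ δ - 1) ∣ c 0 + ∑ i : Fin d, p ^ (ℓ i * δ) * c i.succ := by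
  rw [shift_key]
  exact hc.add (Finset.dvd_sum fun i _ => Dvd.dvd.mul_right (dvd_aux δ (ℓ i)) _)

/-- Sum of two elem nested sets with the same δ. -/
lemma nested_add_same (δ : ℕ) (d e : ℕ) (c : Fin (d + 1) → ℤ) (c' : Fin (e + 1) → ℤ)
    (hc : (p ^ δ - 1) ∣ ∑ i, c i) :
    ({x : ℤ | ∃ ℓ : Fin d → ℕ, (p ^ δ - 1) * x = c 0 + ∑ i : Fin d, p ^ (ℓ i * δ) * c i.succ}
      + {x : ℤ | ∃ ℓ : Fin e → ℕ, (p ^ δ - 1) * x = c' 0 + ∑ i : Fin e, p ^ (ℓ i * δ) * c' i.succ})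
    = {x : ℤ | ∃ ℓ : Fin (d + e) → ℕ,
        (p ^ δ - 1) * x = (Fin.cons (c 0 + c' 0)
            (Fin.append (fun i : Fin d => c i.succ) (fun j : Fin e => c' j.succ)) : Fin (d+e+1) → ℤ) 0
          + ∑ i : Fin (d + e), p ^ (ℓ i * δ) *
            (Fin.cons (c 0 + c' 0)
            (Fin.append (fun i : Fin d => c i.succ) (fun j : Fin e => c' j.succ)) : Fin (d+e+1) → ℤ) i.succ} := by
  set g : Fin (d + e) → ℤ := Fin.append (fun i : Fin d => c i.succ) (fun j : Fin e => c' j.succ) with hg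
  have hcons0 : (Fin.cons (c 0 + c' 0) g : Fin (d+e+1) → ℤ) 0 = c 0 + c' 0 := Fin.cons_zero _ _
  have hconss : ∀ i : Fin (d + e), (Fin.cons (c 0 + c' 0) g : Fin (d+e+1) → ℤ) i.succ = g i :=
    fun i => Fin.cons_succ _ _ _
  ext z
  simp only [Set.mem_add, Set.mem_setOf_eq, hcons0, hconss]
  constructor
  · rintro ⟨x, ⟨ℓ₁, h₁⟩, y, ⟨ℓ₂, h₂⟩, rfl⟩
    refine ⟨Fin.append ℓ₁ ℓ₂, ?_⟩
    rw [mul_add, h₁, h₂, Fin.sum_univ_add]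
    simp only [hg, Fin.append_left, Fin.append_right]
    ring
  · rintro ⟨ℓ, hℓ⟩
    obtain ⟨x, hx⟩ := dvd_shift c hc (fun i => ℓ (Fin.castAdd e i))
    refine ⟨x, ⟨fun i => ℓ (Fin.castAdd e i), hx.symm⟩, z - x,
      ⟨fun j => ℓ (Fin.natAdd d j), ?_⟩, by ring⟩
    rw [mul_sub, hℓ, ← hx, Fin.sum_univ_add]
    simp only [hg, Fin.append_left, Fin.append_right]
    ring

/-- Sum over `Fin (d+e+1)` of the combined coefficient vector. -/
lemma cons_append_sum (d e : ℕ) (c : Fin (d + 1) → ℤ) (c' : Fin (e + 1) → ℤ) :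
    (∑ i, (Fin.cons (c 0 + c' 0)
        (Fin.append (fun i : Fin d => c i.succ) (fun j : Fin e => c' j.succ)) : Fin (d+e+1) → ℤ) i)
      = (∑ i, c i) + ∑ i, c' i := by
  rw [Fin.sum_univ_succ, Fin.sum_univ_succ (f := c), Fin.sum_univ_succ (f := c')]
  simp only [Fin.cons_zero, Fin.cons_succ, Fin.sum_univ_add, Fin.append_left, Fin.append_right]
  ring

lemma nested_rescale (hp : 2 ≤ p) (δ₁ k : ℕ) (h1 : 0 < δ₁) (hk : 0 < k)
    (d : ℕ) (c : Fin (d + 1) → ℤ) (hc : (p ^ δ₁ - 1) ∣ ∑ i, c i) :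
    ∃ C : (Fin d → Fin k) → (Fin (d + 1) → ℤ),
      (∀ r, (p ^ (k * δ₁) - 1) ∣ ∑ i, C r i) ∧
      {x : ℤ | ∃ ℓ : Fin d → ℕ, (p ^ δ₁ - 1) * x = c 0 + ∑ i : Fin d, p ^ (ℓ i * δ₁) * c i.succ}
        = ⋃ r : Fin d → Fin k, {x : ℤ | ∃ ℓ : Fin d → ℕ,
            (p ^ (k * δ₁) - 1) * x = C r 0 + ∑ i : Fin d, p ^ (ℓ i * (k * δ₁)) * C r i.succ} := by
  have hδ1 : (1:ℤ) < p ^ δ₁ := one_lt_pow₀ (by linarith) h1.ne'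
  have hne1 : (p ^ δ₁ - 1 : ℤ) ≠ 0 := by omega
  obtain ⟨m, hm⟩ := dvd_aux (p := p) δ₁ k
  have hmne : m ≠ 0 := by
    intro h
    have hδ : (1:ℤ) < p ^ (k * δ₁) := one_lt_pow₀ (by linarith) (by positivity)
    rw [h, mul_zero] at hm; omega
  refine ⟨fun r => Fin.cons (m * c 0) (fun i => p ^ ((r i : ℕ) * δ₁) * (m * c i.succ)), ?_, ?_⟩
  · intro r
    rw [Fin.sum_univ_succ]
    simp only [Fin.cons_zero, Fin.cons_succ]
    have : m * c 0 + ∑ i : Fin d, p ^ ((r i : ℕ) * δ₁) * (m * c i.succ)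
        = m * (c 0 + ∑ i : Fin d, p ^ ((r i : ℕ) * δ₁) * c i.succ) := by
      rw [mul_add, Finset.mul_sum]
      congr 1
      exact Finset.sum_congr rfl fun i _ => by ring
    rw [this, hm, mul_comm (p ^ δ₁ - 1) m]
    exact mul_dvd_mul_left m (dvd_shift c hc _)
  · ext x
    simp only [Set.mem_setOf_eq, Set.mem_iUnion, Fin.cons_zero, Fin.cons_succ]
    constructor
    · rintro ⟨ℓ, hℓ⟩
      refine ⟨fun i => ⟨ℓ i % k, Nat.mod_lt _ hk⟩, fun i => ℓ i / k, ?_⟩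
      have hexp : ∀ i : Fin d, ℓ i / k * (k * δ₁) + ℓ i % k * δ₁ = ℓ i * δ₁ := by
        intro i
        rw [← mul_assoc, ← add_mul]
        congr 1
        rw [mul_comm (ℓ i / k) k]
        exact Nat.div_add_mod _ _
      calc (p ^ (k * δ₁) - 1) * x = m * ((p ^ δ₁ - 1) * x) := by rw [hm]; ring
        _ = m * (c 0 + ∑ i : Fin d, p ^ (ℓ i * δ₁) * c i.succ) := by rw [hℓ]
        _ = _ := by
            rw [mul_add, Finset.mul_sum]
            congr 1
            refine Finset.sum_congr rfl fun i _ => ?_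
            rw [← hexp i, pow_add]
            ring
    · rintro ⟨r, q, hq⟩
      refine ⟨fun i => q i * k + (r i : ℕ), ?_⟩
      refine mul_left_cancel₀ hmne ?_
      have hexp : ∀ i : Fin d, q i * (k * δ₁) + (r i : ℕ) * δ₁ = (q i * k + (r i : ℕ)) * δ₁ := by
        intro i; ring
      calc m * ((p ^ δ₁ - 1) * x) = (p ^ (k * δ₁) - 1) * x := by rw [hm]; ring
        _ = m * c 0 + ∑ i : Fin d, p ^ (q i * (k * δ₁)) * (p ^ ((r i : ℕ) * δ₁) * (m * c i.succ)) := hq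
        _ = m * (c 0 + ∑ i : Fin d, p ^ ((q i * k + (r i : ℕ)) * δ₁) * c i.succ) := by
            rw [mul_add, Finset.mul_sum]
            congr 1
            refine Finset.sum_congr rfl fun i _ => ?_
            rw [← hexp i, pow_add]
            ring


/-- Sum of two elementary nested sets is a finite union of elementary nested sets. -/
lemma nested_add_nested (hp : 2 ≤ p) {S T : Set ℤ}
    (hS : IsElemPNested p S) (hT : IsElemPNested p T) : IsPieceUnion p (S + T) := by
  obtain ⟨δ₁, h1, d, c, hc, rfl⟩ := hS
  obtain ⟨δ₂, h2, e, c', hc', rfl⟩ := hT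
  set L := Nat.lcm δ₁ δ₂ with hL
  have hLpos : 0 < L := Nat.pos_of_ne_zero (Nat.lcm_ne_zero h1.ne' h2.ne')
  set k₁ := L / δ₁ with hk1def
  set k₂ := L / δ₂ with hk2def
  have hL1 : k₁ * δ₁ = L := Nat.div_mul_cancel (Nat.dvd_lcm_left δ₁ δ₂)
  have hL2 : k₂ * δ₂ = L := Nat.div_mul_cancel (Nat.dvd_lcm_right δ₁ δ₂)
  have hk1 : 0 < k₁ := by
    rcases Nat.eq_zero_or_pos k₁ with h | h
    · rw [h] at hL1; omega
    · exact h
  have hk2 : 0 < k₂ := by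
    rcases Nat.eq_zero_or_pos k₂ with h | h
    · rw [h] at hL2; omega
    · exact h
  obtain ⟨C, hCdvd, hCeq⟩ := nested_rescale hp δ₁ k₁ h1 hk1 d c hc
  obtain ⟨C', hCdvd', hCeq'⟩ := nested_rescale hp δ₂ k₂ h2 hk2 e c' hc'
  rw [hL1] at hCdvd hCeq
  rw [hL2] at hCdvd' hCeq'
  rw [hCeq, hCeq', Set.iUnion_add]
  simp_rw [Set.add_iUnion]
  have : (⋃ (r : Fin d → Fin k₁), ⋃ (s : Fin e → Fin k₂),
      ({x : ℤ | ∃ ℓ : Fin d → ℕ, (p ^ L - 1) * x = C r 0 + ∑ i : Fin d, p ^ (ℓ i * L) * C r i.succ}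
        + {x : ℤ | ∃ ℓ : Fin e → ℕ, (p ^ L - 1) * x = C' s 0 + ∑ i : Fin e, p ^ (ℓ i * L) * C' s i.succ}))
      = ⋃ (rs : (Fin d → Fin k₁) × (Fin e → Fin k₂)),
      ({x : ℤ | ∃ ℓ : Fin d → ℕ, (p ^ L - 1) * x = C rs.1 0 + ∑ i : Fin d, p ^ (ℓ i * L) * C rs.1 i.succ}
        + {x : ℤ | ∃ ℓ : Fin e → ℕ, (p ^ L - 1) * x = C' rs.2 0 + ∑ i : Fin e, p ^ (ℓ i * L) * C' rs.2 i.succ}) := by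
    ext x
    simp only [Set.mem_iUnion, Prod.exists]
  rw [this]
  apply isPieceUnion_iUnion
  rintro ⟨r, s⟩
  apply IsPiece.pieceUnion
  left
  refine ⟨L, hLpos, d + e, Fin.cons (C r 0 + C' s 0)
    (Fin.append (fun i : Fin d => C r i.succ) (fun j : Fin e => C' s j.succ)), ?_, ?_⟩
  · rw [cons_append_sum]
    exact (hCdvd r).add (hCdvd' s)
  · exact nested_add_same L d e (C r) (C' s) (hCdvd r)

/-- Translate of an elementary nested set. -/
lemma nested_add_singleton (hp : 2 ≤ p) {S : Set ℤ} (hS : IsElemPNested p S) (a : ℤ) :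
    IsElemPNested p (S + {a}) := by
  obtain ⟨δ, hδ, d, c, hc, rfl⟩ := hS
  refine ⟨δ, hδ, d, Function.update c 0 (c 0 + (p ^ δ - 1) * a), ?_, ?_⟩
  · have hsum : ∑ i, Function.update c 0 (c 0 + (p ^ δ - 1) * a) i
        = (∑ i, c i) + (p ^ δ - 1) * a := by
      rw [Finset.sum_update_of_mem (Finset.mem_univ 0),
        ← Finset.sum_erase_add _ _ (Finset.mem_univ 0)]
      have : Finset.univ \ {(0 : Fin (d+1))} = Finset.univ.erase 0 := by
        rw [Finset.sdiff_singleton_eq_erase]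
      rw [this]
      ring
    rw [hsum]
    exact hc.add (Dvd.intro a rfl)
  · have h0 : Function.update c 0 (c 0 + (p ^ δ - 1) * a) 0 = c 0 + (p ^ δ - 1) * a :=
      Function.update_self 0 _ c
    have hsucc : ∀ i : Fin d, Function.update c 0 (c 0 + (p ^ δ - 1) * a) i.succ = c i.succ :=
      fun i => Function.update_of_ne (Fin.succ_ne_zero i) _ c
    ext x
    simp only [Set.add_singleton, Set.mem_image, Set.mem_setOf_eq, h0, hsucc]
    constructor
    · rintro ⟨s, ⟨ℓ, hℓ⟩, rfl⟩
      exact ⟨ℓ, by rw [mul_add, hℓ]; ring⟩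
    · rintro ⟨ℓ, hℓ⟩
      refine ⟨x - a, ⟨ℓ, ?_⟩, by ring⟩
      rw [mul_sub, hℓ]; ring

/-- A nested set plus a subgroup is a finite union of cosets (pieces). -/
lemma nested_add_subgroup (hp : 2 ≤ p) {S : Set ℤ} (hS : IsElemPNested p S)
    (H : AddSubgroup ℤ) : IsPieceUnion p (S + (H : Set ℤ)) := by
  obtain ⟨g, rfl⟩ := Int.subgroup_cyclic H
  by_cases hg : g = 0
  · subst hg
    have : ((AddSubgroup.closure {(0:ℤ)} : AddSubgroup ℤ) : Set ℤ) = {0} := by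
      rw [AddSubgroup.closure_singleton_zero, AddSubgroup.coe_bot]
    rw [this]
    exact IsPiece.pieceUnion (Or.inl (nested_add_singleton hp hS 0))
  · set H := AddSubgroup.closure {g} with hH
    have hmem : ∀ z : ℤ, g ∣ z → z ∈ H := by
      intro z ⟨w, hw⟩
      rw [hH, AddSubgroup.mem_closure_singleton]
      exact ⟨w, by rw [hw, smul_eq_mul]; ring⟩
    have hrepr : S + (H : Set ℤ) = ⋃ r ∈ (fun s => s % g) '' S, ({r} + (H : Set ℤ)) := by
      ext x
      simp only [Set.mem_iUnion, Set.mem_image, Set.mem_add, Set.mem_singleton_iff,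
        exists_prop, exists_exists_and_eq_and]
      constructor
      · rintro ⟨s, hs, h, hh, rfl⟩
        refine ⟨s, hs, s % g, rfl, (s - s % g) + h, ?_, by ring⟩
        exact H.add_mem (hmem _ ⟨s / g, by rw [Int.emod_def]; ring⟩) hh
      · rintro ⟨s, hs, r, rfl, h, hh, rfl⟩
        refine ⟨s, hs, (s % g - s) + h, ?_, by ring⟩
        exact H.add_mem (hmem _ ⟨-(s / g), by rw [Int.emod_def]; ring⟩) hh
    have hfin : ((fun s => s % g) '' S).Finite := by
      apply Set.Finite.subset (Set.finite_Icc (0:ℤ) (|g|))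
      rintro r ⟨s, _, rfl⟩
      constructor
      · exact Int.emod_nonneg s hg
      · exact (Int.abs_eq_natAbs g ▸ (Int.emod_lt s hg).le)
    rw [hrepr]
    haveI := hfin.fintype
    rw [Set.biUnion_eq_iUnion]
    apply isPieceUnion_iUnion
    rintro ⟨r, hr⟩
    exact IsPiece.pieceUnion (Or.inr ⟨r, H, rfl⟩)


lemma coset_add_coset (a b : ℤ) (H K : AddSubgroup ℤ) :
    ({a} + (H : Set ℤ)) + ({b} + (K : Set ℤ))
      = {a + b} + ((H ⊔ K : AddSubgroup ℤ) : Set ℤ) := by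
  rw [AddSubgroup.normal_add, ← Set.singleton_add_singleton]
  abel

lemma piece_add_piece (hp : 2 ≤ p) {S T : Set ℤ} (hS : IsPiece p S) (hT : IsPiece p T) :
    IsPieceUnion p (S + T) := by
  rcases hS with hS | ⟨a, H, rfl⟩
  · rcases hT with hT | ⟨a, H, rfl⟩
    · exact nested_add_nested hp hS hT
    · have : S + ({a} + (H : Set ℤ)) = (S + {a}) + (H : Set ℤ) := (add_assoc S _ _).symm
      rw [this]
      exact nested_add_subgroup hp (nested_add_singleton hp hS a) H
  · rcases hT with hT | ⟨b, K, rfl⟩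
    · have : ({a} + (H : Set ℤ)) + T = (T + {a}) + (H : Set ℤ) := by
        rw [add_comm _ T, ← add_assoc]
      rw [this]
      exact nested_add_subgroup hp (nested_add_singleton hp hT a) H
    · rw [coset_add_coset]
      exact IsPiece.pieceUnion (Or.inr ⟨a + b, H ⊔ K, rfl⟩)

lemma pieceUnion_add (hp : 2 ≤ p) {S T : Set ℤ}
    (hS : IsPieceUnion p S) (hT : IsPieceUnion p T) : IsPieceUnion p (S + T) := by
  obtain ⟨n, U, hU, rfl⟩ := hS
  obtain ⟨m, V, hV, rfl⟩ := hT
  rw [Set.iUnion_add]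
  simp_rw [Set.add_iUnion]
  have : (⋃ i, ⋃ j, U i + V j) = ⋃ ij : Fin n × Fin m, (U ij.1 + V ij.2) := by
    ext x; simp only [Set.mem_iUnion, Prod.exists]
  rw [this]
  exact isPieceUnion_iUnion _ fun ij => piece_add_piece hp (hU ij.1) (hV ij.2)

lemma basic_pieceUnion (hp : 2 ≤ p) {S : Set ℤ} (h : IsZFBasic p S) : IsPieceUnion p S := by
  induction h with
  | singleton γ =>
    refine IsPiece.pieceUnion (Or.inr ⟨γ, ⊥, ?_⟩)
    ext x; simp [Set.singleton_add]
  | subgroup H =>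
    refine IsPiece.pieceUnion (Or.inr ⟨0, H, ?_⟩)
    ext x; simp [Set.singleton_add]
  | cycle γ δ hδ => exact IsPiece.pieceUnion (Or.inl (zcycle_nested hp γ δ hδ))
  | add S T _ _ ihS ihT => exact pieceUnion_add hp ihS ihT


lemma zf_of_basic {S : Set ℤ} (h : IsZFBasic p S) : IsZFSet p S :=
  ⟨1, fun _ => S, fun _ => h, (Set.iUnion_const S).symm⟩

lemma zf_add {S T : Set ℤ} (hS : IsZFSet p S) (hT : IsZFSet p T) : IsZFSet p (S + T) := by
  obtain ⟨n, U, hU, rfl⟩ := hS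
  obtain ⟨m, V, hV, rfl⟩ := hT
  rw [Set.iUnion_add]
  simp_rw [Set.add_iUnion]
  have : (⋃ i, ⋃ j, U i + V j) = ⋃ ij : Fin n × Fin m, (U ij.1 + V ij.2) := by
    ext x; simp only [Set.mem_iUnion, Prod.exists]
  rw [this]
  exact flatten_iUnion _ _ fun ij =>
    zf_of_basic (IsZFBasic.add _ _ (hU ij.1) (hV ij.2))

lemma zf_sum {ι : Type*} (t : Finset ι) (f : ι → Set ℤ)
    (h : ∀ i ∈ t, IsZFSet p (f i)) : IsZFSet p (∑ i ∈ t, f i) := by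
  classical
  induction t using Finset.induction_on with
  | empty =>
    have : (∑ i ∈ (∅ : Finset ι), f i) = ({0} : Set ℤ) := by
      rw [Finset.sum_empty]
      rfl
    rw [this]
    exact zf_of_basic (IsZFBasic.singleton 0)
  | insert a t' hx ih =>
    rw [Finset.sum_insert hx]
    exact zf_add (h a (Finset.mem_insert_self a t'))
      (ih fun i hi => h i (Finset.mem_insert_of_mem hi))

lemma mem_zeroCycle (γ : ℤ) (δ : ℕ) (y : ℤ) :
    y ∈ ({0} ∪ ZCycle p γ δ : Set ℤ)
      ↔ ∃ n : ℕ, y = ∑ j ∈ Finset.range n, p ^ (j * δ) * γ := by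
  simp only [Set.mem_union, Set.mem_singleton_iff, ZCycle, Set.mem_setOf_eq]
  constructor
  · rintro (rfl | ⟨ℓ, rfl⟩)
    · exact ⟨0, by simp⟩
    · exact ⟨ℓ + 1, rfl⟩
  · rintro ⟨n, rfl⟩
    cases n with
    | zero => left; simp
    | succ m => right; exact ⟨m, rfl⟩

lemma nested_zfset (hp : 2 ≤ p) {S : Set ℤ} (hS : IsElemPNested p S) : IsZFSet p S := by
  obtain ⟨δ, hδ, d, c, ⟨s₀, hs₀⟩, rfl⟩ := hS
  have hne : (p ^ δ - 1 : ℤ) ≠ 0 := by have := pow_delta_pos hp δ hδ; omega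
  have key : {x : ℤ | ∃ ℓ : Fin d → ℕ,
        (p ^ δ - 1) * x = c 0 + ∑ i : Fin d, p ^ (ℓ i * δ) * c i.succ}
      = {s₀} + ∑ i : Fin d, ({0} ∪ ZCycle p (c i.succ) δ) := by
    ext x
    simp only [Set.mem_setOf_eq, Set.mem_add, Set.mem_singleton_iff]
    constructor
    · rintro ⟨ℓ, hℓ⟩
      refine ⟨s₀, rfl, ∑ i : Fin d, (∑ j ∈ Finset.range (ℓ i), p ^ (j * δ) * c i.succ), ?_, ?_⟩
      · rw [Set.mem_finset_sum]
        exact ⟨fun i => ∑ j ∈ Finset.range (ℓ i), p ^ (j * δ) * c i.succ,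
          fun {i} _ => (mem_zeroCycle _ _ _).mpr ⟨ℓ i, rfl⟩, rfl⟩
      · refine (mul_left_cancel₀ hne ?_)
        rw [hℓ, shift_key δ c ℓ, mul_add, Finset.mul_sum, ← hs₀]
        congr 1
        exact Finset.sum_congr rfl fun i _ => geom_key δ (c i.succ) (ℓ i)
    · rintro ⟨a, rfl, b, hb, rfl⟩
      rw [Set.mem_finset_sum] at hb
      obtain ⟨g, hg, rfl⟩ := hb
      choose n hn using fun i => (mem_zeroCycle (p := p) (c i.succ) δ (g i)).mp
        (hg (Finset.mem_univ i))
      refine ⟨n, ?_⟩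
      rw [shift_key δ c n, mul_add, Finset.mul_sum, ← hs₀]
      congr 1
      refine Finset.sum_congr rfl fun i _ => ?_
      rw [hn i]
      exact geom_key δ (c i.succ) (n i)
  rw [key]
  refine zf_add (zf_of_basic (IsZFBasic.singleton s₀)) (zf_sum _ _ fun i _ => ?_)
  have : ({0} ∪ ZCycle p (c i.succ) δ : Set ℤ) = ⋃ b : Bool,
      (if b then {0} else ZCycle p (c i.succ) δ) := by
    ext x; simp [Set.mem_union, or_comm]
  rw [this]
  exact flatten_iUnion _ _ fun b => by
    cases b
    · exact zf_of_basic (IsZFBasic.cycle _ δ hδ)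
    · exact zf_of_basic (IsZFBasic.singleton 0)

end Aux

/-- For `F : ℤ → ℤ` multiplication by `p ≥ 2`: (a) every `F`-subset of
`ℤ` is `p`-normal, and (b) every `p`-normal subset of `ℤ` has finite symmetric
difference with some `F`-subset of `ℤ`. -/
theorem zfset_iff_pnormal (p : ℤ) (hp : 2 ≤ p) :
    (∀ S : Set ℤ, IsZFSet p S → IsPNormal p S) ∧
    (∀ S : Set ℤ, IsPNormal p S → ∃ T : Set ℤ, IsZFSet p T ∧ (symmDiff S T).Finite) := by
  constructor
  · rintro S ⟨n, U, hU, rfl⟩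
    obtain ⟨N, W, hW, heq⟩ := flatten_iUnion (IsPiece p) U (fun i => basic_pieceUnion hp (hU i))
    refine ⟨N, W, fun j => hW j, ?_⟩
    rw [heq, symmDiff_self]
    exact Set.finite_empty
  · rintro S ⟨n, U, hU, hfin⟩
    refine ⟨⋃ i, U i, ?_, hfin⟩
    exact flatten_iUnion (IsZFBasic p) U fun i => by
      rcases hU i with h | ⟨a, H, heq⟩
      · exact nested_zfset hp h
      · exact heq ▸ zf_of_basic (IsZFBasic.add _ _ (.singleton a) (.subgroup H))
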